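/- The positive part of the unit ball of any infinite-dimensional L^p space, 1 ≤ p < ∞, is not LNC (with respect to the norm topology): there exist x, x' in the set and a sequence x_k → x in the set with x_k + (x'-x)/2 never in the set. -/

import Mathlib

open Set Filter Topology MeasureTheory

/-- Locally nonconical (LNC). -/
def LNC {X : Type*} [AddCommGroup X] [Module ℝ X] [TopologicalSpace X] (Q : Set X) : Prop :=
  ∀ x ∈ Q, ∀ x' ∈ Q,
    ∃ U, U ⊆ Q ∧ U ∈ nhdsWithin x Q ∧ ∀ u ∈ U, u + (2⁻¹ : ℝ) • (x' - x) ∈ Q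

private lemma aux_eval {Ω : Type*} {A : ℕ → Set Ω}
    (hdisj : Pairwise (Function.onFun Disjoint A)) (v : ℕ → ENNReal) {ω : Ω} {n : ℕ}
    (hω : ω ∈ A n) : ∑' m, (A m).indicator (fun _ => v m) ω = v n := by
  rw [tsum_eq_single n]
  · simp [hω]
  · intro m hm
    have hm' : ω ∉ A m := fun h => Set.disjoint_left.mp (hdisj hm) h hω
    simp [hm']

private lemma aux_meas {Ω : Type*} [MeasurableSpace Ω] {A : ℕ → Set Ω}
    (hA : ∀ n, MeasurableSet (A n)) (v : ℕ → ENNReal) :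
    Measurable fun ω => (∑' m, (A m).indicator (fun _ => v m) ω).toReal :=
  (Measurable.ennreal_tsum fun m => measurable_const.indicator (hA m)).ennreal_toReal

private lemma aux_lint {Ω : Type*} [MeasurableSpace Ω] (μ : Measure Ω) {A : ℕ → Set Ω}
    (hA : ∀ n, MeasurableSet (A n)) (hdisj : Pairwise (Function.onFun Disjoint A))
    (v : ℕ → ENNReal) (hv : ∀ n, v n ≠ ⊤) {pt : ℝ} (hpt : 0 < pt) :
    ∫⁻ ω, (‖(∑' m, (A m).indicator (fun _ => v m) ω).toReal‖₊ : ENNReal) ^ pt ∂μ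
      = ∑' n, v n ^ pt * μ (A n) := by
  have hpw : ∀ ω, (‖(∑' m, (A m).indicator (fun _ => v m) ω).toReal‖₊ : ENNReal) ^ pt
      = ∑' m, (A m).indicator (fun _ => v m ^ pt) ω := by
    intro ω
    by_cases hω : ∃ n, ω ∈ A n
    · obtain ⟨n, hn⟩ := hω
      rw [aux_eval hdisj v hn, aux_eval hdisj _ hn,
        ← enorm_eq_nnnorm, Real.enorm_eq_ofReal ENNReal.toReal_nonneg, ENNReal.ofReal_toReal (hv n)]
    · push_neg at hω
      have h1 : (∑' m, (A m).indicator (fun _ => v m) ω) = 0 :=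
        ENNReal.tsum_eq_zero.mpr fun m => Set.indicator_of_notMem (hω m) _
      have h2 : (∑' m, (A m).indicator (fun _ => v m ^ pt) ω) = 0 :=
        ENNReal.tsum_eq_zero.mpr fun m => Set.indicator_of_notMem (hω m) _
      rw [h1, h2]
      simp [ENNReal.zero_rpow_of_pos hpt]
  simp_rw [hpw]
  rw [lintegral_tsum fun m => (measurable_const.indicator (hA m)).aemeasurable]
  exact tsum_congr fun n => lintegral_indicator_const (hA n) _

/-- The positive part of the unit ball of an infinite-dimensional `L^p` space, `1 ≤ p < ∞`
(infinite-dimensionality guaranteed by a sequence of pairwise disjoint sets of positive finite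
measure), is not LNC: in fact there are `x, x'` in the set and a sequence `x_k → x` in the set
with `x_k + (x' - x)/2` never in the set. -/
theorem posPartUnitBall_Lp_not_lnc {Ω : Type*} [MeasurableSpace Ω] (μ : Measure Ω)
    (p : ENNReal) [Fact (1 ≤ p)] (hp : p ≠ ⊤)
    (A : ℕ → Set Ω) (hA : ∀ n, MeasurableSet (A n))
    (hdisj : Pairwise (Function.onFun Disjoint A))
    (hpos : ∀ n, 0 < μ (A n)) (hfin : ∀ n, μ (A n) < ⊤) :
    let S : Set (Lp ℝ p μ) := {f | 0 ≤ f ∧ ‖f‖ ≤ 1}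
    (¬ LNC S) ∧
    ∃ x ∈ S, ∃ x' ∈ S, ∃ xk : ℕ → Lp ℝ p μ,
      (∀ k, xk k ∈ S) ∧ Tendsto xk atTop (𝓝 x) ∧
      ∀ k, xk k + (2⁻¹ : ℝ) • (x' - x) ∉ S := by
  intro S
  classical
  have hp1 : (1 : ENNReal) ≤ p := Fact.out
  have hp0 : p ≠ 0 := fun h => by simp [h] at hp1
  have hpt : 0 < p.toReal := ENNReal.toReal_pos hp0 hp
  set pt := p.toReal with hptdef
  have hμ0 : ∀ n, μ (A n) ≠ 0 := fun n => (hpos n).ne'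
  have hμt : ∀ n, μ (A n) ≠ ⊤ := fun n => (hfin n).ne
  -- the coefficients
  set b : ℕ → ENNReal := fun n => ((2 : ENNReal) ^ (n + 1) * μ (A n))⁻¹ with hb
  have hb0 : ∀ n, b n ≠ 0 := fun n =>
    ENNReal.inv_ne_zero.mpr (ENNReal.mul_ne_top (ENNReal.pow_ne_top ENNReal.ofNat_ne_top) (hμt n))
  have hbt : ∀ n, b n ≠ ⊤ := fun n =>
    ENNReal.inv_ne_top.mpr (mul_ne_zero (pow_ne_zero _ two_ne_zero) (hμ0 n))
  set d : ℕ → ENNReal := fun n => b n ^ (1 / pt) with hd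
  have hd0 : ∀ n, d n ≠ 0 := fun n =>
    (ENNReal.rpow_pos (lt_of_le_of_ne zero_le (Ne.symm (hb0 n))) (hbt n)).ne'
  have hdt : ∀ n, d n ≠ ⊤ := fun n =>
    ENNReal.rpow_ne_top_of_nonneg (by positivity) (hbt n)
  have hdpow : ∀ n, d n ^ pt = b n := by
    intro n
    rw [hd, ← ENNReal.rpow_mul, one_div_mul_cancel hpt.ne', ENNReal.rpow_one]
  have hmass : ∀ n, d n ^ pt * μ (A n) = (2⁻¹ : ENNReal) ^ (n + 1) := by
    intro n
    simp only [hdpow, hb]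
    rw [ENNReal.mul_inv (Or.inl (pow_ne_zero _ two_ne_zero)) (Or.inl (ENNReal.pow_ne_top ENNReal.ofNat_ne_top)),
      mul_assoc, ENNReal.inv_mul_cancel (hμ0 n) (hμt n), mul_one, ← ENNReal.inv_pow]
  have hgeo : ∑' n : ℕ, (2⁻¹ : ENNReal) ^ (n + 1) = 1 := by
    simp_rw [pow_succ]
    rw [ENNReal.tsum_mul_right, ENNReal.tsum_geometric, ENNReal.one_sub_inv_two, inv_inv,
      ENNReal.mul_inv_cancel two_ne_zero ENNReal.ofNat_ne_top]
  -- the functions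
  set g : Ω → ℝ := fun ω => (∑' m, (A m).indicator (fun _ => d m) ω).toReal with hg
  set gk : ℕ → Ω → ℝ := fun k ω =>
    (∑' m, (A m).indicator (fun _ => if m = k then 0 else d m) ω).toReal with hgk
  -- membership and norm bounds
  have hmem : ∀ v : ℕ → ENNReal, (∀ n, v n ≠ ⊤) → (∀ n, v n ≤ d n) →
      MemLp (fun ω => (∑' m, (A m).indicator (fun _ => v m) ω).toReal) p μ ∧
      eLpNorm (fun ω => (∑' m, (A m).indicator (fun _ => v m) ω).toReal) p μ ≤ 1 := by
    intro v hv hvd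
    have hle : ∑' n, v n ^ pt * μ (A n) ≤ 1 := by
      calc ∑' n, v n ^ pt * μ (A n) ≤ ∑' n, d n ^ pt * μ (A n) :=
            ENNReal.tsum_le_tsum fun n =>
              mul_le_mul' (ENNReal.rpow_le_rpow (hvd n) hpt.le) le_rfl
        _ = ∑' n, (2⁻¹ : ENNReal) ^ (n + 1) := tsum_congr hmass
        _ = 1 := hgeo
    have hsn : eLpNorm (fun ω => (∑' m, (A m).indicator (fun _ => v m) ω).toReal) p μ ≤ 1 := by
      rw [eLpNorm_eq_lintegral_rpow_enorm_toReal hp0 hp]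
      simp only [enorm_eq_nnnorm]
      rw [aux_lint μ hA hdisj v hv hpt]
      calc (∑' n, v n ^ pt * μ (A n)) ^ (1 / pt) ≤ (1 : ENNReal) ^ (1 / pt) :=
            ENNReal.rpow_le_rpow hle (by positivity)
        _ = 1 := ENNReal.one_rpow _
    exact ⟨⟨(aux_meas hA v).aestronglyMeasurable, lt_of_le_of_lt hsn ENNReal.one_lt_top⟩, hsn⟩
  have hmemg : MemLp g p μ := (hmem d hdt fun n => le_rfl).1
  have hsng : eLpNorm g p μ ≤ 1 := (hmem d hdt fun n => le_rfl).2
  have hmemgk : ∀ k, MemLp (gk k) p μ ∧ eLpNorm (gk k) p μ ≤ 1 := fun k =>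
    hmem _ (fun n => by split <;> simp [hdt n]) (fun n => by split <;> simp)
  set x : Lp ℝ p μ := hmemg.toLp g with hx
  set X : ℕ → Lp ℝ p μ := fun k => (hmemgk k).1.toLp (gk k) with hX
  -- membership in S
  have hx_mem : x ∈ S := by
    constructor
    · rw [← Lp.coeFn_nonneg]
      filter_upwards [hmemg.coeFn_toLp] with ω hω
      rw [hω]
      exact ENNReal.toReal_nonneg
    · rw [hx, Lp.norm_toLp g hmemg]
      exact ENNReal.toReal_le_of_le_ofReal one_pos.le (by simpa using hsng)
  have hX_mem : ∀ k, X k ∈ S := by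
    intro k
    constructor
    · rw [← Lp.coeFn_nonneg]
      filter_upwards [(hmemgk k).1.coeFn_toLp] with ω hω
      rw [hω]
      exact ENNReal.toReal_nonneg
    · rw [hX, Lp.norm_toLp _ (hmemgk k).1]
      exact ENNReal.toReal_le_of_le_ofReal one_pos.le (by simpa using (hmemgk k).2)
  have h0_mem : (0 : Lp ℝ p μ) ∈ S := ⟨le_refl 0, by simp⟩
  -- the difference
  have hdiff : ∀ k, gk k - g = (A k).indicator fun _ => -(d k).toReal := by
    intro k
    funext ω
    simp only [Pi.sub_apply, hgk, hg]
    by_cases hω : ∃ n, ω ∈ A n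
    · obtain ⟨n, hn⟩ := hω
      by_cases hnk : n = k
      · subst hnk
        rw [aux_eval hdisj _ hn, aux_eval hdisj _ hn, Set.indicator_of_mem hn]
        simp
      · have hωk : ω ∉ A k := fun h => Set.disjoint_left.mp (hdisj hnk) hn h
        rw [aux_eval hdisj _ hn, aux_eval hdisj _ hn, Set.indicator_of_notMem hωk]
        simp [hnk]
    · push_neg at hω
      have h1 : (∑' m, (A m).indicator (fun _ => if m = k then 0 else d m) ω) = 0 :=
        ENNReal.tsum_eq_zero.mpr fun m => Set.indicator_of_notMem (hω m) _
      have h2 : (∑' m, (A m).indicator (fun _ => d m) ω) = 0 :=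
        ENNReal.tsum_eq_zero.mpr fun m => Set.indicator_of_notMem (hω m) _
      rw [h1, h2, Set.indicator_of_notMem (hω k)]
      simp
  have hdiffnorm : ∀ k, ‖X k - x‖ = ((2⁻¹ : ENNReal) ^ (1 / pt)).toReal ^ (k + 1) := by
    intro k
    rw [hX, hx, ← MemLp.toLp_sub (hmemgk k).1 hmemg, Lp.norm_toLp _ _,
      eLpNorm_congr_ae (Filter.EventuallyEq.of_eq (hdiff k)),
      eLpNorm_indicator_const (hA k) hp0 hp]
    have h1 : ‖-(d k).toReal‖ₑ = d k := by
      rw [enorm_neg, Real.enorm_eq_ofReal ENNReal.toReal_nonneg,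
        ENNReal.ofReal_toReal (hdt k)]
    rw [h1]
    have h2 : d k * μ (A k) ^ (1 / pt) = ((2⁻¹ : ENNReal) ^ (k + 1)) ^ (1 / pt) := by
      have hdk : d k = b k ^ (1 / pt) := rfl
      rw [hdk, ← ENNReal.mul_rpow_of_nonneg _ _ (by positivity)]
      congr 1
      rw [← hdpow k]
      exact hmass k
    rw [h2, ← ENNReal.rpow_natCast (2⁻¹ : ENNReal) (k + 1), ← ENNReal.rpow_mul, mul_comm,
      ENNReal.rpow_mul, ENNReal.rpow_natCast, ENNReal.toReal_pow]
  -- convergence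
  have hr0 : (0 : ℝ) ≤ ((2⁻¹ : ENNReal) ^ (1 / pt)).toReal := ENNReal.toReal_nonneg
  have hr1 : ((2⁻¹ : ENNReal) ^ (1 / pt)).toReal < 1 := by
    rw [← ENNReal.toReal_one]
    exact ENNReal.toReal_strict_mono ENNReal.one_ne_top
      (ENNReal.rpow_lt_one (by norm_num) (one_div_pos.mpr hpt))
  have htend : Tendsto X atTop (𝓝 x) := by
    rw [tendsto_iff_norm_sub_tendsto_zero]
    have h := (tendsto_pow_atTop_nhds_zero_of_lt_one hr0 hr1).comp (tendsto_add_atTop_nat 1)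
    exact h.congr fun k => (hdiffnorm k).symm
  -- the bad points
  have hbad : ∀ k, X k + (2⁻¹ : ℝ) • ((0 : Lp ℝ p μ) - x) ∉ S := by
    intro k hk
    have h1 : (0 : Ω → ℝ) ≤ᵐ[μ] ⇑(X k + (2⁻¹ : ℝ) • ((0 : Lp ℝ p μ) - x)) :=
      (Lp.coeFn_nonneg _).mpr hk.1
    have h2 : ⇑(X k + (2⁻¹ : ℝ) • ((0 : Lp ℝ p μ) - x)) =ᵐ[μ]
        fun ω => gk k ω + 2⁻¹ * (0 - g ω) := by
      filter_upwards [Lp.coeFn_add (X k) ((2⁻¹ : ℝ) • ((0 : Lp ℝ p μ) - x)),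
        Lp.coeFn_smul (2⁻¹ : ℝ) ((0 : Lp ℝ p μ) - x),
        Lp.coeFn_sub (0 : Lp ℝ p μ) x, Lp.coeFn_zero ℝ p μ,
        (hmemgk k).1.coeFn_toLp, hmemg.coeFn_toLp] with ω ha hs hsub hz hgk' hg'
      rw [ha, Pi.add_apply, hs, Pi.smul_apply, hsub, Pi.sub_apply, hz, Pi.zero_apply]
      simp only [smul_eq_mul]
      rw [hgk', hg']
    have h3 : ∀ᵐ ω ∂μ, 0 ≤ gk k ω + 2⁻¹ * (0 - g ω) := by
      filter_upwards [h1, h2] with ω h1ω h2ω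
      rw [← h2ω]
      exact h1ω
    have h4 : ∀ ω ∈ A k, ¬ (0 ≤ gk k ω + 2⁻¹ * (0 - g ω)) := by
      intro ω hω
      have hgkω : gk k ω = 0 := by
        simp only [hgk]
        rw [aux_eval hdisj _ hω]
        simp
      have hgω : g ω = (d k).toReal := by
        simp only [hg]
        rw [aux_eval hdisj _ hω]
      have hdkpos : 0 < (d k).toReal := ENNReal.toReal_pos (hd0 k) (hdt k)
      rw [hgkω, hgω]
      simp only [zero_add, zero_sub, not_le]
      nlinarith
    have h5 : μ (A k) = 0 :=
      measure_mono_null (fun ω hω => h4 ω hω) (ae_iff.mp h3)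
    exact hμ0 k h5
  -- conclusion
  have hnot : ¬ LNC S := by
    intro hlnc
    obtain ⟨U, hUS, hUmem, hUadd⟩ := hlnc x hx_mem 0 h0_mem
    have htend' : Tendsto X atTop (𝓝[S] x) :=
      tendsto_nhdsWithin_of_tendsto_nhds_of_eventually_within _ htend
        (Eventually.of_forall hX_mem)
    have hev : ∀ᶠ k in atTop, X k ∈ U := htend' hUmem
    obtain ⟨k, hk⟩ := hev.exists
    exact hbad k (hUadd _ hk)
  exact ⟨hnot, x, hx_mem, 0, h0_mem, X, hX_mem, htend, hbad⟩
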